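/- arXiv:2108.08716 — 2 statements merged into one kernel-verified Lean document; each statement's English description precedes it below -/
import Mathlib

section
/- Let F be a finite field with q elements, let n ≥ 1 be an integer, and let α_1, …, α_n be nonzero elements of F. For every integer w with 1 ≤ w ≤ n, the number of vectors x ∈ F^n of Hamming weight w satisfying the single parity-check equation α_1 x_1 + ⋯ + α_n x_n = 0 equals binom(n, w) · ((q−1)^w + (q−1)(−1)^w)/q; in particular, this number does not depend on the choice of the nonzero coefficients α_1, …, α_n. -/
/-- The Hamming weight of a vector: the number of nonzero coordinates. -/
def hammingWt {n : ℕ} {F : Type*} [Zero F] [DecidableEq F] (x : Fin n → F) : ℕ :=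
  (Finset.univ.filter (fun i => x i ≠ 0)).card

section Aux

variable {F : Type*} [Field F] [Fintype F] [DecidableEq F]

lemma card_allnonzero (m : ℕ) :
    (Finset.univ.filter (fun z : Fin m → F => ∀ j, z j ≠ 0)).card
      = (Fintype.card F - 1) ^ m := by
  rw [← Fintype.card_subtype]
  rw [Fintype.card_congr (Equiv.subtypePiEquivPi (p := fun _ : Fin m => fun b : F => b ≠ 0))]
  rw [Fintype.card_pi]
  have : Fintype.card {b : F // b ≠ 0} = Fintype.card F - 1 := by
    rw [Fintype.card_subtype, Finset.filter_ne', Finset.card_erase_of_mem (Finset.mem_univ _),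
      Finset.card_univ]
  simp [this]

lemma key (q : ℕ) (hq : Fintype.card F = q) (m : ℕ) :
    (((Finset.univ.filter (fun z : Fin m → F => (∀ j, z j ≠ 0) ∧ ∑ j, z j = 0)).card : ℚ))
      = (((q : ℚ) - 1) ^ m + ((q : ℚ) - 1) * (-1) ^ m) / q := by
  have hq0 : (q : ℚ) ≠ 0 := by
    have : 0 < q := hq ▸ Fintype.card_pos
    positivity
  induction m with
  | zero =>
      have : (Finset.univ.filter (fun z : Fin 0 → F => (∀ j, z j ≠ 0) ∧ ∑ j, z j = 0))
          = Finset.univ := by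
        apply Finset.filter_true_of_mem
        intro x _
        exact ⟨fun j => j.elim0, by simp⟩
      rw [this]
      simp
      field_simp
  | succ m ih =>
      -- bijection with {z : Fin m → F | all nonzero ∧ sum ≠ 0}
      have hbij : (Finset.univ.filter
            (fun z : Fin (m+1) → F => (∀ j, z j ≠ 0) ∧ ∑ j, z j = 0)).card
          = (Finset.univ.filter
            (fun z : Fin m → F => (∀ j, z j ≠ 0) ∧ ¬ (∑ j, z j = 0))).card := by
        apply Finset.card_nbij' (fun x => Fin.tail x) (fun y => Fin.cons (-∑ j, y j) y)
        · intro x hx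
          simp only [Finset.mem_coe, Finset.mem_filter, Finset.mem_univ, true_and] at hx ⊢
          obtain ⟨hnz, hsum⟩ := hx
          refine ⟨fun j => hnz j.succ, ?_⟩
          have : ∑ j, x j = x 0 + ∑ j : Fin m, Fin.tail x j := by
            rw [← Fin.sum_cons (x 0) (Fin.tail x), Fin.cons_self_tail]
          rw [this] at hsum
          intro h
          rw [h, add_zero] at hsum
          exact hnz 0 hsum
        · intro y hy
          simp only [Finset.mem_coe, Finset.mem_filter, Finset.mem_univ, true_and] at hy ⊢
          obtain ⟨hnz, hsum⟩ := hy
          constructor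
          · intro j
            refine Fin.cases ?_ ?_ j
            · simpa using hsum
            · intro i; simpa using hnz i
          · rw [Fin.sum_cons]; ring
        · intro x hx
          simp only [Finset.mem_coe, Finset.mem_filter, Finset.mem_univ, true_and] at hx
          obtain ⟨hnz, hsum⟩ := hx
          have hx0 : -∑ j : Fin m, Fin.tail x j = x 0 := by
            have h2 : ∑ j, x j = x 0 + ∑ j : Fin m, Fin.tail x j := by
              rw [← Fin.sum_cons (x 0) (Fin.tail x), Fin.cons_self_tail]
            rw [h2] at hsum
            exact neg_eq_of_add_eq_zero_left hsum
          show Fin.cons (-∑ j, Fin.tail x j) (Fin.tail x) = x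
          rw [hx0, Fin.cons_self_tail]
        · intro y _; simp [Fin.tail_cons]
      have hsplit :
          (Finset.univ.filter (fun z : Fin m → F => (∀ j, z j ≠ 0) ∧ ∑ j, z j = 0)).card
          + (Finset.univ.filter (fun z : Fin m → F => (∀ j, z j ≠ 0) ∧ ¬ (∑ j, z j = 0))).card
          = (Fintype.card F - 1) ^ m := by
        rw [← card_allnonzero m]
        have h1 := Finset.card_filter_add_card_filter_not
          (s := Finset.univ.filter (fun z : Fin m → F => ∀ j, z j ≠ 0))
          (fun z : Fin m → F => ∑ j, z j = 0)
        rw [Finset.filter_filter, Finset.filter_filter] at h1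
        exact h1
      have hge : 1 ≤ Fintype.card F := Fintype.card_pos
      have hcast : ((Fintype.card F - 1 : ℕ) : ℚ) = (q : ℚ) - 1 := by
        rw [Nat.cast_sub hge, hq, Nat.cast_one]
      have hQ : ((Finset.univ.filter
            (fun z : Fin m → F => (∀ j, z j ≠ 0) ∧ ¬ (∑ j, z j = 0))).card : ℚ)
          = ((q:ℚ) - 1) ^ m - (((Finset.univ.filter
            (fun z : Fin m → F => (∀ j, z j ≠ 0) ∧ ∑ j, z j = 0)).card : ℚ)) := by
        have := congrArg (fun k : ℕ => (k : ℚ)) hsplit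
        push_cast at this
        rw [hcast] at this
        linarith
      rw [hbij, hQ, ih]
      field_simp
      ring
end Aux

/-- Let `F` be a finite field with `q` elements, `n ≥ 1`, and `α 1, …, α n` nonzero elements
of `F`. For every `1 ≤ w ≤ n`, the number of vectors `x ∈ F^n` of Hamming weight `w`
satisfying the single parity check `∑ i, α i * x i = 0` equals
`binom(n,w) * ((q-1)^w + (q-1)(-1)^w)/q`; in particular it does not depend on the nonzero
coefficients `α` (the right-hand side does not mention `α`). -/
theorem stmt_3 (F : Type*) [Field F] [Fintype F] [DecidableEq F]
    (q : ℕ) (hq : Fintype.card F = q) (n : ℕ) (hn : 1 ≤ n)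
    (α : Fin n → F) (hα : ∀ i, α i ≠ 0)
    (w : ℕ) (hw1 : 1 ≤ w) (hwn : w ≤ n) :
    ((Finset.univ.filter
        (fun x : Fin n → F => hammingWt x = w ∧ ∑ i, α i * x i = 0)).card : ℚ)
      = (n.choose w : ℚ) * ((((q : ℚ) - 1) ^ w + ((q : ℚ) - 1) * (-1) ^ w) / q) := by
  classical
  set K := (Finset.univ.filter (fun z : Fin w → F => (∀ j, z j ≠ 0) ∧ ∑ j, z j = 0)).card with hKdef
  set s := Finset.univ.filter
      (fun x : Fin n → F => hammingWt x = w ∧ ∑ i, α i * x i = 0) with hsdef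
  have hfib : s.card = ∑ S ∈ Finset.powersetCard w (Finset.univ : Finset (Fin n)),
      (s.filter (fun x => Finset.univ.filter (fun i => x i ≠ 0) = S)).card := by
    apply Finset.card_eq_sum_card_fiberwise
    intro x hx
    rw [hsdef, Finset.mem_coe, Finset.mem_filter] at hx
    rw [Finset.mem_coe, Finset.mem_powersetCard_univ]
    exact hx.2.1
  have hfiber : ∀ S ∈ Finset.powersetCard w (Finset.univ : Finset (Fin n)),
      (s.filter (fun x => Finset.univ.filter (fun i => x i ≠ 0) = S)).card = K := by
    intro S hS
    rw [Finset.mem_powersetCard_univ] at hS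
    set e := S.equivFinOfCardEq hS with he
    apply Finset.card_nbij'
      (i := fun x => fun j : Fin w => α (e.symm j) * x (e.symm j))
      (j := fun z => fun i : Fin n => if h : i ∈ S then (α i)⁻¹ * z (e ⟨i, h⟩) else 0)
    · intro x hx
      simp only [Finset.mem_coe, hsdef, Finset.mem_filter, Finset.mem_univ, true_and] at hx
      obtain ⟨⟨hwt, hsum⟩, hsupp⟩ := hx
      have hmem : ∀ i : Fin n, x i ≠ 0 ↔ i ∈ S := by
        intro i
        rw [← hsupp]; simp
      simp only [Finset.mem_coe, Finset.mem_filter, Finset.mem_univ, true_and]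
      constructor
      · intro j
        exact mul_ne_zero (hα _) ((hmem _).2 (e.symm j).2)
      · have h1 : ∑ j : Fin w, α ((e.symm j : {i // i ∈ S}) : Fin n) * x (e.symm j)
            = ∑ i : {i // i ∈ S}, α i * x i := by
          exact (Fintype.sum_equiv e _ _ (fun i => by rw [Equiv.symm_apply_apply])).symm
        rw [h1]
        rw [Finset.sum_coe_sort S (fun i => α i * x i)]
        rw [← hsum]
        apply Finset.sum_subset (Finset.subset_univ S)
        intro i _ hiS
        have : x i = 0 := by
          by_contra hxi
          exact hiS ((hmem i).1 hxi)
        rw [this, mul_zero]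
    · intro z hz
      simp only [Finset.mem_coe, Finset.mem_filter, Finset.mem_univ, true_and] at hz
      obtain ⟨hnz, hzsum⟩ := hz
      have hmem : ∀ i : Fin n,
          (if h : i ∈ S then (α i)⁻¹ * z (e ⟨i, h⟩) else 0) ≠ 0 ↔ i ∈ S := by
        intro i
        by_cases h : i ∈ S
        · rw [dif_pos h]
          constructor
          · intro _; exact h
          · intro _; exact mul_ne_zero (inv_ne_zero (hα i)) (hnz _)
        · simp [h]
      simp only [Finset.mem_coe, hsdef, Finset.mem_filter, Finset.mem_univ, true_and]
      have hsupp : (Finset.univ.filter fun i =>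
          (if h : i ∈ S then (α i)⁻¹ * z (e ⟨i, h⟩) else 0) ≠ 0) = S := by
        ext i
        simp only [Finset.mem_filter, Finset.mem_univ, true_and]
        exact hmem i
      refine ⟨⟨?_, ?_⟩, hsupp⟩
      · rw [hammingWt, hsupp, hS]
      · have h2 : ∀ i : {x // x ∈ S},
            α (i : Fin n) * (if h : (i : Fin n) ∈ S then (α (i : Fin n))⁻¹ * z (e ⟨i, h⟩) else 0)
              = z (e i) := by
          intro i
          rw [dif_pos i.2, Subtype.coe_eta, ← mul_assoc, mul_inv_cancel₀ (hα _), one_mul]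
        calc ∑ i : Fin n, α i * (if h : i ∈ S then (α i)⁻¹ * z (e ⟨i, h⟩) else 0)
            = ∑ i ∈ S, α i * (if h : i ∈ S then (α i)⁻¹ * z (e ⟨i, h⟩) else 0) :=
              (Finset.sum_subset (Finset.subset_univ S)
                (fun i _ hi => by rw [dif_neg hi, mul_zero])).symm
          _ = ∑ i : {x // x ∈ S},
                α (i : Fin n) * (if h : (i : Fin n) ∈ S then (α (i : Fin n))⁻¹ * z (e ⟨i, h⟩) else 0) :=
              (Finset.sum_coe_sort _ _).symm
          _ = ∑ i : {x // x ∈ S}, z (e i) := Finset.sum_congr rfl fun i _ => h2 i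
          _ = ∑ j, z j := Fintype.sum_equiv e _ _ (fun i => rfl)
          _ = 0 := hzsum
    · intro x hx
      simp only [Finset.mem_coe, hsdef, Finset.mem_filter, Finset.mem_univ, true_and] at hx
      obtain ⟨⟨hwt, hsum⟩, hsupp⟩ := hx
      have hmem : ∀ i : Fin n, x i ≠ 0 ↔ i ∈ S := by
        intro i; rw [← hsupp]; simp
      funext i
      by_cases h : i ∈ S
      · simp only [h, dif_pos]
        have : e.symm (e ⟨i, h⟩) = ⟨i, h⟩ := Equiv.symm_apply_apply _ _
        rw [this, ← mul_assoc, inv_mul_cancel₀ (hα i), one_mul]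
      · simp only [h, dif_neg, not_false_iff]
        by_contra hxi
        exact h ((hmem i).1 (Ne.symm hxi))
    · intro z hz
      funext j
      have h0 : ((e.symm j : {i // i ∈ S}) : Fin n) ∈ S := (e.symm j).2
      simp only [h0, dif_pos]
      have : (⟨((e.symm j : {i // i ∈ S}) : Fin n), h0⟩ : {i // i ∈ S}) = e.symm j :=
        Subtype.coe_eta _ _
      rw [this, Equiv.apply_symm_apply, ← mul_assoc, mul_inv_cancel₀ (hα _), one_mul]
  rw [hfib, Finset.sum_congr rfl hfiber, Finset.sum_const, Finset.card_powersetCard,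
    Finset.card_univ, Fintype.card_fin, smul_eq_mul]
  push_cast
  rw [hKdef, key q hq w]
end

section
/- Let F be a finite field with q elements, let K ≥ 1, L ≥ 1, J ≥ 1 be integers, set N = KL, and let K_1, …, K_J be integers with 1 ≤ K_j ≤ K. Let H be the random (JL)×N matrix over F formed by stacking J independent random strips, where the j-th strip is obtained from the strip pattern with parameters (K, K_j, L) by choosing i.i.d. uniformly random nonzero labels of F for its ones and independently applying a uniformly random permutation of the N columns (all labels and permutations independent across strips). Then for every integer w with 1 ≤ w ≤ N, the expected number of vectors x ∈ F^N with Hamming weight w and H x = 0 equals (q−1)^{w(1−J)} · binom(N, w)^{1−J} · Π_{j=1}^J f_{j,w}, where f_{j,w} is the coefficient of s^w in f_j(s)^L and f_j(s) = (1/q)·[(1+(q−1)s)^{K_j} + (q−1)(1−s)^{K_j}] · (1+(q−1)s)^{K−K_j}. -/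
open Polynomial

/-- The index `i·L + t` (0-based) of the one in row `t` and occurrence `i` of the strip
pattern, as an element of `Fin (K*L)`. -/
def stripIdx (K L i t : ℕ) (hi : i < K) (ht : t < L) : Fin (K * L) :=
  ⟨i * L + t, by
    calc i * L + t < i * L + L := Nat.add_lt_add_left ht _
      _ = (i + 1) * L := by ring
      _ ≤ K * L := Nat.mul_le_mul_right L hi⟩

/-- `f_j(s) = (1/q)·[(1+(q-1)s)^{K_j} + (q-1)(1-s)^{K_j}] · (1+(q-1)s)^{K-K_j}` as a
polynomial over `ℚ`. -/
noncomputable def fpoly (q K Kj : ℕ) : ℚ[X] :=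
  C ((q : ℚ))⁻¹ * ((1 + C ((q : ℚ) - 1) * X) ^ Kj + C ((q : ℚ) - 1) * (1 - X) ^ Kj) *
    (1 + C ((q : ℚ) - 1) * X) ^ (K - Kj)

section Aux
open Finset

lemma exists_perm_image {n : ℕ} (B B' : Finset (Fin n)) (h : B.card = B'.card) :
    ∃ τ : Equiv.Perm (Fin n), B.image τ = B' := by
  classical
  have h1 : Fintype.card {x // x ∈ B} = Fintype.card {x // x ∈ B'} := by
    simpa using h
  have h2 : Fintype.card {x // ¬ x ∈ B} = Fintype.card {x // ¬ x ∈ B'} := by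
    rw [Fintype.card_subtype_compl, Fintype.card_subtype_compl, h1]
  let e1 := Fintype.equivOfCardEq h1
  let e2 := Fintype.equivOfCardEq h2
  refine ⟨(Equiv.sumCompl (· ∈ B)).symm.trans ((e1.sumCongr e2).trans
      (Equiv.sumCompl (· ∈ B'))), ?_⟩
  have hmem : ∀ x ∈ B, ((Equiv.sumCompl (· ∈ B)).symm.trans ((e1.sumCongr e2).trans
      (Equiv.sumCompl (· ∈ B')))) x ∈ B' := by
    intro x hx
    simp only [Equiv.trans_apply]
    rw [show (Equiv.sumCompl (· ∈ B)).symm x = Sum.inl ⟨x, hx⟩ by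
      simp [Equiv.sumCompl, dif_pos hx]]
    simp
  apply Finset.eq_of_subset_of_card_le
  · intro y hy
    obtain ⟨x, hx, rfl⟩ := Finset.mem_image.1 hy
    exact hmem x hx
  · rw [Finset.card_image_of_injective _ (Equiv.injective _), ← h]

lemma sum_perm_image {n w : ℕ} (g : Finset (Fin n) → ℚ) (A : Finset (Fin n))
    (hA : A.card = w) :
    ∑ σ : Equiv.Perm (Fin n), g (A.image σ) =
      ((n.factorial : ℚ) / (n.choose w : ℚ)) *
        ∑ B ∈ Finset.powersetCard w (univ : Finset (Fin n)), g B := by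
  classical
  set t := Finset.powersetCard w (univ : Finset (Fin n)) with ht
  have hmaps : ∀ σ : Equiv.Perm (Fin n), σ ∈ (univ : Finset (Equiv.Perm (Fin n))) →
      A.image σ ∈ t := by
    intro σ _
    rw [Finset.mem_powersetCard]
    exact ⟨Finset.subset_univ _, by rw [Finset.card_image_of_injective _ (Equiv.injective _), hA]⟩
  have hconst : ∀ B ∈ t, ∀ B' ∈ t,
      (univ.filter (fun σ : Equiv.Perm (Fin n) => A.image σ = B)).card =
      (univ.filter (fun σ : Equiv.Perm (Fin n) => A.image σ = B')).card := by
    intro B hB B' hB'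
    rw [Finset.mem_powersetCard] at hB hB'
    obtain ⟨τ, hτ⟩ := exists_perm_image B B' (hB.2.trans hB'.2.symm)
    apply Finset.card_bij (fun σ _ => τ * σ)
    · intro σ hσ
      simp only [Finset.mem_filter, Finset.mem_univ, true_and] at hσ ⊢
      rw [← hσ] at hτ
      rw [← hτ, Finset.image_image]
      rfl
    · intro a _ b _ hab
      exact mul_left_cancel hab
    · intro σ' hσ'
      simp only [Finset.mem_filter, Finset.mem_univ, true_and] at hσ'
      refine ⟨τ⁻¹ * σ', ?_, by group⟩
      simp only [Finset.mem_filter, Finset.mem_univ, true_and]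
      rw [show A.image ⇑(τ⁻¹ * σ') = (A.image ⇑σ').image ⇑τ⁻¹ by
        rw [Finset.image_image]; rfl, hσ', ← hτ, Finset.image_image]
      simp [Function.comp_def]
  set c := (univ.filter (fun σ : Equiv.Perm (Fin n) => A.image σ = A.image ⇑(1 : Equiv.Perm (Fin n)))).card with hc
  have hA1 : A.image ⇑(1 : Equiv.Perm (Fin n)) ∈ t := hmaps 1 (Finset.mem_univ _)
  have hfib : ∀ B ∈ t, (univ.filter (fun σ : Equiv.Perm (Fin n) => A.image σ = B)).card = c :=
    fun B hB => hconst B hB _ hA1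
  have hcard : (t.card : ℚ) * c = (n.factorial : ℚ) := by
    have h0 := Finset.card_eq_sum_card_fiberwise hmaps
    rw [Finset.card_univ, Fintype.card_perm, Fintype.card_fin] at h0
    have h1 : (n.factorial : ℚ) = ∑ B ∈ t, ((univ.filter
        (fun σ : Equiv.Perm (Fin n) => A.image σ = B)).card : ℚ) := by
      exact_mod_cast congrArg (Nat.cast (R := ℚ)) h0
    rw [h1, Finset.sum_congr rfl (fun B hB => by rw [hfib B hB])]
    simp [mul_comm]
  have htc : t.card = n.choose w := by
    rw [ht, Finset.card_powersetCard, Finset.card_univ, Fintype.card_fin]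
  have hw : w ≤ n := by
    rw [← hA]
    simpa using Finset.card_le_card (Finset.subset_univ A)
  have hchoose : (0:ℚ) < (n.choose w : ℚ) := by exact_mod_cast Nat.choose_pos hw
  rw [← Finset.sum_fiberwise_of_maps_to hmaps (fun σ => g (A.image ⇑σ))]
  have hB : ∀ B ∈ t, (∑ σ ∈ univ.filter (fun σ : Equiv.Perm (Fin n) => A.image ⇑σ = B),
      g (A.image ⇑σ)) = (c : ℚ) * g B := by
    intro B hB
    rw [Finset.sum_congr rfl (fun σ hσ => by rw [(Finset.mem_filter.1 hσ).2]),
      Finset.sum_const, hfib B hB, nsmul_eq_mul]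
  rw [Finset.sum_congr rfl hB, ← Finset.mul_sum]
  rw [htc] at hcard
  have : (c : ℚ) = (n.factorial : ℚ) / (n.choose w : ℚ) := by
    field_simp
    rw [← hcard]; ring
  rw [this]



variable {F : Type*} [Field F] [Fintype F] [DecidableEq F]

lemma wt_eq_sum {n : ℕ} (x : Fin n → F) :
    hammingWt x = ∑ i, if x i ≠ 0 then 1 else 0 := Finset.card_filter _ _

lemma wt_cons {n : ℕ} (a : F) (v : Fin n → F) :
    hammingWt (Fin.cons a v) = (if a ≠ 0 then 1 else 0) + hammingWt v := by
  rw [wt_eq_sum, wt_eq_sum, Fin.sum_univ_succ, Fin.cons_zero]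
  simp [Fin.cons_succ]

lemma sum_pow_ind (q : ℕ) (hq : Fintype.card F = q) :
    ∑ a : F, (X : ℚ[X]) ^ (if a ≠ 0 then 1 else 0) = 1 + C ((q : ℚ) - 1) * X := by
  have h1 : 1 ≤ q := hq ▸ Fintype.card_pos
  have : ∀ a : F, (X : ℚ[X]) ^ (if a ≠ 0 then 1 else 0) = if a = 0 then 1 else X := by
    intro a; by_cases h : a = 0 <;> simp [h]
  rw [Finset.sum_congr rfl (fun a _ => this a), Finset.sum_ite]
  have h2 : (univ.filter (fun a : F => a = 0)) = {0} := by ext a; simp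
  have h3 : (univ.filter (fun a : F => ¬ a = 0)).card = q - 1 := by
    rw [Finset.filter_not, Finset.card_sdiff_of_subset (by simp [h2]), h2, Finset.card_univ, hq]
    simp
  rw [h2, Finset.sum_const, Finset.sum_const, h3]
  simp only [Finset.card_singleton, one_smul, nsmul_eq_mul]
  have : ((q - 1 : ℕ) : ℚ[X]) = C ((q : ℚ) - 1) := by
    push_cast [Nat.cast_sub h1]
    simp
  rw [this]

/-- total generating function -/
lemma gf_total (q : ℕ) (hq : Fintype.card F = q) (n : ℕ) :
    ∑ v : Fin n → F, (X : ℚ[X]) ^ (hammingWt v) = (1 + C ((q : ℚ) - 1) * X) ^ n := by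
  induction n with
  | zero => simp [hammingWt]
  | succ n ih =>
    rw [← Equiv.sum_comp (Fin.consEquiv (fun _ : Fin (n+1) => F))
      (fun v => (X : ℚ[X]) ^ (hammingWt v)), Fintype.sum_prod_type]
    have : ∀ (a : F) (v : Fin n → F),
        (X : ℚ[X]) ^ hammingWt ((Fin.consEquiv (fun _ : Fin (n+1) => F)) (a, v)) =
        X ^ (if a ≠ 0 then 1 else 0) * X ^ hammingWt v := by
      intro a v
      show (X:ℚ[X]) ^ hammingWt (Fin.cons a v) = _
      rw [wt_cons, pow_add]
    simp_rw [this]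
    rw [← Finset.sum_mul_sum, sum_pow_ind q hq, ih, pow_succ]
    ring
/-- zero-sum generating function -/
lemma gf_zerosum (q : ℕ) (hq : Fintype.card F = q) (n : ℕ) :
    C (q : ℚ) * ∑ v : Fin n → F, (if (∑ i, v i) = 0 then (1:ℚ[X]) else 0) * X ^ (hammingWt v)
      = (1 + C ((q : ℚ) - 1) * X) ^ n + C ((q : ℚ) - 1) * (1 - X) ^ n := by
  have hCq : (C (q : ℚ) : ℚ[X]) = 1 + C ((q : ℚ) - 1) := by
    rw [map_sub, map_one]; ring
  induction n with
  | zero =>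
    simp only [pow_zero]
    rw [show ∑ v : Fin 0 → F, (if (∑ i, v i) = 0 then (1:ℚ[X]) else 0) * X ^ (hammingWt v)
      = 1 by simp [hammingWt]]
    rw [mul_one, hCq, mul_one]
  | succ n ih =>
    rw [← Equiv.sum_comp (Fin.consEquiv (fun _ : Fin (n+1) => F))
      (fun v => (if (∑ i, v i) = 0 then (1:ℚ[X]) else 0) * X ^ (hammingWt v)),
      Fintype.sum_prod_type]
    have key : ∀ v : Fin n → F,
        (∑ a : F, (if (∑ i, (Fin.consEquiv (fun _ : Fin (n+1) => F)) (a, v) i) = 0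
            then (1:ℚ[X]) else 0) *
          X ^ (hammingWt ((Fin.consEquiv (fun _ : Fin (n+1) => F)) (a, v))))
        = (if (∑ i, v i) = 0 then (1:ℚ[X]) else 0) * X ^ (hammingWt v)
          + X * (X ^ (hammingWt v)
            - (if (∑ i, v i) = 0 then (1:ℚ[X]) else 0) * X ^ (hammingWt v)) := by
      intro v
      have hc : ∀ a : F, (Fin.consEquiv (fun _ : Fin (n+1) => F)) (a, v) = Fin.cons a v :=
        fun a => rfl
      simp_rw [hc, Fin.sum_cons, wt_cons]
      rw [Finset.sum_eq_single (-(∑ i, v i))]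
      · rw [show -(∑ i, v i) + ∑ i, v i = 0 by ring, if_pos rfl, one_mul, pow_add]
        by_cases h : (∑ i, v i) = 0
        · simp [h]
        · rw [if_pos (show ¬ (-(∑ i, v i) = 0) by simpa using h), pow_one, if_neg h]
          ring
      · intro a _ ha
        rw [if_neg (fun h => ha (eq_neg_of_add_eq_zero_left h)), zero_mul]
      · intro h; exact absurd (Finset.mem_univ _) h
    rw [Finset.sum_comm, Finset.sum_congr rfl (fun v _ => key v)]
    rw [Finset.sum_add_distrib, ← Finset.mul_sum, Finset.sum_sub_distrib]
    have ht := gf_total q hq n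
    rw [pow_succ, pow_succ]
    linear_combination (1 - X) * ih + C (q:ℚ) * X * ht +
      X * (1 + C ((q:ℚ)-1) * X) ^ n * hCq

lemma card_nz (q : ℕ) (hq : Fintype.card F = q) :
    Fintype.card {x : F // x ≠ 0} = q - 1 := by
  have h := Fintype.card_subtype_compl (p := fun x : F => x = 0)
  rw [Fintype.card_subtype_eq, hq] at h
  exact h

lemma natcast_pred (q : ℕ) (hq : Fintype.card F = q) :
    ((q - 1 : ℕ) : ℚ) = (q : ℚ) - 1 := by
  have h1 : 1 ≤ q := hq ▸ Fintype.card_pos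
  push_cast [Nat.cast_sub h1]; ring

lemma gf_label (q : ℕ) (hq : Fintype.card F = q) (k : ℕ) :
    ∑ v : Fin k → F, (∑ a : Fin k → {x : F // x ≠ 0},
        if (∑ i, (a i : F) * v i) = 0 then (1:ℚ[X]) else 0) * X ^ hammingWt v
    = C ((q:ℚ) - 1) ^ k *
        ∑ v : Fin k → F, (if (∑ i, v i) = 0 then (1:ℚ[X]) else 0) * X ^ hammingWt v := by
  simp_rw [Finset.sum_mul]
  rw [Finset.sum_comm]
  have key : ∀ a : Fin k → {x : F // x ≠ 0},
      (∑ v : Fin k → F, (if (∑ i, (a i : F) * v i) = 0 then (1:ℚ[X]) else 0) * X ^ hammingWt v)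
      = ∑ v : Fin k → F, (if (∑ i, v i) = 0 then (1:ℚ[X]) else 0) * X ^ hammingWt v := by
    intro a
    apply Fintype.sum_equiv (Equiv.piCongrRight (fun i => Equiv.mulLeft₀ (a i : F) (a i).2))
    intro v
    have h1 : ∀ i, (Equiv.piCongrRight (fun i => Equiv.mulLeft₀ (a i : F) (a i).2)) v i
        = (a i : F) * v i := fun i => rfl
    have h2 : hammingWt ((Equiv.piCongrRight (fun i => Equiv.mulLeft₀ (a i : F) (a i).2)) v)
        = hammingWt v := by
      unfold hammingWt
      congr 1
      apply Finset.filter_congr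
      intro i _
      simp [h1 i, mul_ne_zero_iff, (a i).2]
    rw [h2]
    simp_rw [h1]
  rw [Finset.sum_congr rfl (fun a _ => key a), Finset.sum_const, Finset.card_univ, nsmul_eq_mul]
  congr 1
  rw [Fintype.card_pi]
  simp only [Finset.prod_const, Finset.card_univ, card_nz q hq, Fintype.card_fin]
  push_cast
  rw [show ((q - 1 : ℕ) : ℚ[X]) = C ((q:ℚ) - 1) by rw [← natcast_pred q hq]; simp]

lemma gf_row (q : ℕ) (hq : Fintype.card F = q) (K k : ℕ) (hk : k ≤ K) :
    ∑ v : Fin K → F, (∑ a : Fin k → {x : F // x ≠ 0},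
        if (∑ i, (a i : F) * v (Fin.castLE hk i)) = 0 then (1:ℚ[X]) else 0) * X ^ hammingWt v
    = (∑ u : Fin k → F, (∑ a : Fin k → {x : F // x ≠ 0},
        if (∑ i, (a i : F) * u i) = 0 then (1:ℚ[X]) else 0) * X ^ hammingWt u)
      * (1 + C ((q:ℚ) - 1) * X) ^ (K - k) := by
  set e0 : Fin k ⊕ Fin (K - k) ≃ Fin K :=
    finSumFinEquiv.trans (finCongr (Nat.add_sub_cancel' hk)) with he0
  set E := (Equiv.sumArrowEquivProdArrow (Fin k) (Fin (K-k)) F).symm.trans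
      (Equiv.arrowCongr e0 (Equiv.refl F)) with hE
  have hEapp : ∀ (u : Fin k → F) (z : Fin (K-k) → F) (s : Fin k ⊕ Fin (K-k)),
      E (u, z) (e0 s) = Sum.elim u z s := by
    intro u z s
    simp only [hE, Equiv.trans_apply, Equiv.arrowCongr_apply, Function.comp_apply,
      Equiv.symm_apply_apply, Equiv.refl_apply]
    cases s <;> rfl
  have f1 : ∀ (u : Fin k → F) (z : Fin (K-k) → F) (i : Fin k),
      E (u, z) (Fin.castLE hk i) = u i := by
    intro u z i
    have h : Fin.castLE hk i = e0 (Sum.inl i) := by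
      apply Fin.ext
      simp [he0]
    rw [h, hEapp]
    rfl
  have f2 : ∀ (u : Fin k → F) (z : Fin (K-k) → F),
      hammingWt (E (u, z)) = hammingWt u + hammingWt z := by
    intro u z
    rw [wt_eq_sum, wt_eq_sum, wt_eq_sum,
      ← Equiv.sum_comp e0 (fun p => if E (u,z) p ≠ 0 then (1:ℕ) else 0),
      Fintype.sum_sum_type]
    congr 1
    · exact Finset.sum_congr rfl (fun i _ => by rw [hEapp]; rfl)
    · exact Finset.sum_congr rfl (fun i _ => by rw [hEapp]; rfl)
  rw [← Equiv.sum_comp E (fun v => (∑ a : Fin k → {x : F // x ≠ 0},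
      if (∑ i, (a i : F) * v (Fin.castLE hk i)) = 0 then (1:ℚ[X]) else 0) * X ^ hammingWt v),
    Fintype.sum_prod_type]
  have key : ∀ (u : Fin k → F),
      (∑ z : Fin (K-k) → F, (∑ a : Fin k → {x : F // x ≠ 0},
        if (∑ i, (a i : F) * (E (u, z)) (Fin.castLE hk i)) = 0 then (1:ℚ[X]) else 0)
          * X ^ hammingWt (E (u, z)))
      = ((∑ a : Fin k → {x : F // x ≠ 0},
          if (∑ i, (a i : F) * u i) = 0 then (1:ℚ[X]) else 0) * X ^ hammingWt u)
        * ∑ z : Fin (K-k) → F, X ^ hammingWt z := by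
    intro u
    rw [Finset.mul_sum]
    apply Finset.sum_congr rfl
    intro z _
    simp_rw [f1, f2, pow_add]
    ring
  rw [Finset.sum_congr rfl (fun u _ => key u), ← Finset.sum_mul, gf_total q hq]



lemma gf_row' (q : ℕ) (hq : Fintype.card F = q) (K k : ℕ) (hk : k ≤ K) :
    ∑ v : Fin K → F, (∑ a : Fin k → {x : F // x ≠ 0},
        if (∑ i, (a i : F) * v (Fin.castLE hk i)) = 0 then (1:ℚ[X]) else 0) * X ^ hammingWt v
    = C ((q:ℚ) - 1) ^ k * fpoly q K k := by
  have hq0 : (q : ℚ) ≠ 0 := by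
    have : 1 ≤ q := hq ▸ Fintype.card_pos
    positivity
  rw [gf_row q hq K k hk, gf_label q hq k]
  have hz := gf_zerosum q hq k
  have hS : (∑ v : Fin k → F, (if (∑ i, v i) = 0 then (1:ℚ[X]) else 0) * X ^ hammingWt v)
      = C ((q:ℚ))⁻¹ * ((1 + C ((q : ℚ) - 1) * X) ^ k + C ((q : ℚ) - 1) * (1 - X) ^ k) := by
    have h1 : (C ((q:ℚ))⁻¹ : ℚ[X]) * C (q:ℚ) = 1 := by
      rw [← C_mul, inv_mul_cancel₀ hq0, C_1]
    calc (∑ v : Fin k → F, (if (∑ i, v i) = 0 then (1:ℚ[X]) else 0) * X ^ hammingWt v)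
        = C ((q:ℚ))⁻¹ * (C (q:ℚ) *
          ∑ v : Fin k → F, (if (∑ i, v i) = 0 then (1:ℚ[X]) else 0) * X ^ hammingWt v) := by
          rw [← mul_assoc, h1, one_mul]
      _ = _ := by rw [hz]
  rw [hS, fpoly]
  ring

lemma gf_strip (q : ℕ) (hq : Fintype.card F = q) (K L k : ℕ) (hk : k ≤ K) :
    ∑ y : Fin (K * L) → F, (∑ a : Fin L → Fin k → {x : F // x ≠ 0},
        if (∀ t : Fin L, ∑ i : Fin k, (a t i : F) *
          y (stripIdx K L i.1 t.1 (lt_of_lt_of_le i.isLt hk) t.isLt) = 0)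
        then (1:ℚ[X]) else 0) * X ^ hammingWt y
    = (C ((q:ℚ) - 1) ^ k * fpoly q K k) ^ L := by
  set e : Fin L × Fin K ≃ Fin (K * L) :=
    (Equiv.prodComm (Fin L) (Fin K)).trans finProdFinEquiv with he
  set E : (Fin L → Fin K → F) ≃ (Fin (K * L) → F) :=
    (Equiv.curry (Fin L) (Fin K) F).symm.trans
      (Equiv.arrowCongr e (Equiv.refl F)) with hE
  have hEapp : ∀ (Y : Fin L → Fin K → F) (p : Fin L × Fin K), E Y (e p) = Y p.1 p.2 := by
    intro Y p
    simp only [hE, Equiv.trans_apply, Equiv.arrowCongr_apply, Function.comp_apply,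
      Equiv.symm_apply_apply, Equiv.refl_apply]
    rfl
  have g1 : ∀ (Y : Fin L → Fin K → F) (i t : ℕ) (hi : i < K) (ht : t < L),
      E Y (stripIdx K L i t hi ht) = Y ⟨t, ht⟩ ⟨i, hi⟩ := by
    intro Y i t hi ht
    have h : stripIdx K L i t hi ht = e (⟨t, ht⟩, ⟨i, hi⟩) := by
      apply Fin.ext
      simp [he, stripIdx]
      ring
    rw [h, hEapp]
  have g2 : ∀ Y : Fin L → Fin K → F, hammingWt (E Y) = ∑ t, hammingWt (Y t) := by
    intro Y
    rw [wt_eq_sum, ← Equiv.sum_comp e (fun p => if E Y p ≠ 0 then (1:ℕ) else 0),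
      Fintype.sum_prod_type]
    exact Finset.sum_congr rfl fun t _ => by
      rw [wt_eq_sum]
      exact Finset.sum_congr rfl fun i _ => by rw [hEapp]
  rw [← Equiv.sum_comp E (fun y => (∑ a : Fin L → Fin k → {x : F // x ≠ 0},
      if (∀ t : Fin L, ∑ i : Fin k, (a t i : F) *
        y (stripIdx K L i.1 t.1 (lt_of_lt_of_le i.isLt hk) t.isLt) = 0)
      then (1:ℚ[X]) else 0) * X ^ hammingWt y)]
  have key : ∀ Y : Fin L → Fin K → F,
      (∑ a : Fin L → Fin k → {x : F // x ≠ 0},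
        if (∀ t : Fin L, ∑ i : Fin k, (a t i : F) *
          (E Y) (stripIdx K L i.1 t.1 (lt_of_lt_of_le i.isLt hk) t.isLt) = 0)
        then (1:ℚ[X]) else 0) * X ^ hammingWt (E Y)
      = ∏ t, ((∑ b : Fin k → {x : F // x ≠ 0},
          if (∑ i : Fin k, (b i : F) * (Y t) (Fin.castLE hk i)) = 0
          then (1:ℚ[X]) else 0) * X ^ hammingWt (Y t)) := by
    intro Y
    have hcond : ∀ (a : Fin L → Fin k → {x : F // x ≠ 0}) (t : Fin L),
        (∑ i : Fin k, (a t i : F) *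
          (E Y) (stripIdx K L i.1 t.1 (lt_of_lt_of_le i.isLt hk) t.isLt))
        = ∑ i : Fin k, (a t i : F) * (Y t) (Fin.castLE hk i) := by
      intro a t
      exact Finset.sum_congr rfl fun i _ => by rw [g1]; rfl
    simp_rw [hcond]
    have hind : ∀ a : Fin L → Fin k → {x : F // x ≠ 0},
        (if (∀ t : Fin L, ∑ i : Fin k, (a t i : F) * (Y t) (Fin.castLE hk i) = 0)
        then (1:ℚ[X]) else 0)
        = ∏ t, (if (∑ i : Fin k, (a t i : F) * (Y t) (Fin.castLE hk i) = 0)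
            then (1:ℚ[X]) else 0) := by
      intro a
      by_cases h : ∀ t : Fin L, ∑ i : Fin k, (a t i : F) * (Y t) (Fin.castLE hk i) = 0
      · rw [if_pos h, Finset.prod_congr rfl (fun t _ => if_pos (h t)), Finset.prod_const_one]
      · push_neg at h
        obtain ⟨t, ht⟩ := h
        rw [if_neg (by push_neg; exact ⟨t, ht⟩)]
        refine (Finset.prod_eq_zero (Finset.mem_univ t) ?_).symm
        exact if_neg ht
    simp_rw [hind]
    rw [← Fintype.prod_sum (fun t (b : Fin k → {x : F // x ≠ 0}) =>
      if (∑ i : Fin k, (b i : F) * (Y t) (Fin.castLE hk i)) = 0 then (1:ℚ[X]) else 0)]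
    rw [g2, ← Finset.prod_pow_eq_pow_sum, ← Finset.prod_mul_distrib]
  rw [Finset.sum_congr rfl (fun Y _ => key Y)]
  rw [← Fintype.prod_sum (fun (t : Fin L) (v : Fin K → F) =>
    (∑ b : Fin k → {x : F // x ≠ 0},
      if (∑ i : Fin k, (b i : F) * v (Fin.castLE hk i)) = 0
      then (1:ℚ[X]) else 0) * X ^ hammingWt v)]
  rw [Finset.prod_congr rfl (fun t _ => gf_row' q hq K k hk), Finset.prod_const,
    Finset.card_univ, Fintype.card_fin]

def mulNzEquiv {F : Type*} [Field F] (c : F) (hc : c ≠ 0) :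
    {x : F // x ≠ 0} ≃ {x : F // x ≠ 0} where
  toFun x := ⟨x.1 * c, mul_ne_zero x.2 hc⟩
  invFun x := ⟨x.1 * c⁻¹, mul_ne_zero x.2 (inv_ne_zero hc)⟩
  left_inv x := by
    apply Subtype.ext
    field_simp
  right_inv x := by
    apply Subtype.ext
    field_simp

lemma D_supp (K L k : ℕ) (hk : k ≤ K) (y y' : Fin (K*L) → F)
    (h : ∀ p, y p = 0 ↔ y' p = 0) :
    (∑ a : Fin L → Fin k → {x : F // x ≠ 0},
      if (∀ t : Fin L, ∑ i : Fin k, (a t i : F) *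
        y (stripIdx K L i.1 t.1 (lt_of_lt_of_le i.isLt hk) t.isLt) = 0)
      then (1:ℚ) else 0)
    = (∑ a : Fin L → Fin k → {x : F // x ≠ 0},
      if (∀ t : Fin L, ∑ i : Fin k, (a t i : F) *
        y' (stripIdx K L i.1 t.1 (lt_of_lt_of_le i.isLt hk) t.isLt) = 0)
      then (1:ℚ) else 0) := by
  set eab : ∀ (t : Fin L) (i : Fin k), {x : F // x ≠ 0} ≃ {x : F // x ≠ 0} := fun t i =>
    if h0 : y' (stripIdx K L i.1 t.1 (lt_of_lt_of_le i.isLt hk) t.isLt) = 0 then Equiv.refl _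
    else mulNzEquiv (y (stripIdx K L i.1 t.1 (lt_of_lt_of_le i.isLt hk) t.isLt) /
        y' (stripIdx K L i.1 t.1 (lt_of_lt_of_le i.isLt hk) t.isLt))
      (div_ne_zero (fun hy => h0 ((h _).mp hy)) h0) with heab
  apply Fintype.sum_equiv (Equiv.piCongrRight (fun t => Equiv.piCongrRight (fun i => eab t i)))
  intro a
  have hsum : ∀ t : Fin L,
      (∑ i : Fin k, (((Equiv.piCongrRight (fun t => Equiv.piCongrRight (fun i => eab t i))) a)
          t i : F) * y' (stripIdx K L i.1 t.1 (lt_of_lt_of_le i.isLt hk) t.isLt))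
      = ∑ i : Fin k, (a t i : F) *
          y (stripIdx K L i.1 t.1 (lt_of_lt_of_le i.isLt hk) t.isLt) := by
    intro t
    apply Finset.sum_congr rfl
    intro i _
    have happ : ((Equiv.piCongrRight (fun t => Equiv.piCongrRight (fun i => eab t i))) a) t i
        = eab t i (a t i) := rfl
    rw [happ]
    by_cases h0 : y' (stripIdx K L i.1 t.1 (lt_of_lt_of_le i.isLt hk) t.isLt) = 0
    · rw [heab]
      simp only [dif_pos h0, Equiv.refl_apply, h0, (h _).mpr h0, mul_zero]
    · rw [heab]
      simp only [dif_neg h0, mulNzEquiv]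
      show ((a t i : F) * _) * _ = _
      field_simp
  simp only [hsum]

lemma supp_fiber_count (q : ℕ) (hq : Fintype.card F = q) (n : ℕ) (B : Finset (Fin n)) :
    (∑ y : Fin n → F, if (Finset.univ.filter (fun p => y p ≠ 0)) = B then (1:ℚ) else 0)
    = ((q - 1 : ℕ) : ℚ) ^ B.card := by
  classical
  have hiff : ∀ y : Fin n → F,
      ((Finset.univ.filter (fun p => y p ≠ 0)) = B) ↔ (∀ p, y p ≠ 0 ↔ p ∈ B) := by
    intro y
    rw [Finset.ext_iff]
    simp [Finset.mem_filter]
  have hcount : (∑ y : Fin n → F, if (Finset.univ.filter (fun p => y p ≠ 0)) = B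
      then (1:ℚ) else 0)
      = (Fintype.card {y : Fin n → F // ∀ p, y p ≠ 0 ↔ p ∈ B} : ℚ) := by
    rw [Finset.sum_boole, Fintype.card_subtype]
    congr 1
    apply Finset.card_bij (fun y _ => y) ?_ (by intro a _ b _ hab; exact hab) ?_
    · intro y hy
      simp only [Finset.mem_filter, Finset.mem_univ, true_and] at hy ⊢
      exact (hiff y).mp hy
    · intro y hy
      simp only [Finset.mem_filter, Finset.mem_univ, true_and] at hy
      refine ⟨y, ?_, rfl⟩
      simp only [Finset.mem_filter, Finset.mem_univ, true_and]
      exact (hiff y).mpr hy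
  rw [hcount]
  have E : {y : Fin n → F // ∀ p, y p ≠ 0 ↔ p ∈ B} ≃ (B → {x : F // x ≠ 0}) := {
    toFun := fun y p => ⟨y.1 p.1, (y.2 p.1).mpr p.2⟩
    invFun := fun f => ⟨fun p => if h : p ∈ B then (f ⟨p, h⟩).1 else 0, by
      intro p
      by_cases h : p ∈ B
      · simp [h, (f ⟨p, h⟩).2]
      · simp [h]⟩
    left_inv := fun y => by
      apply Subtype.ext
      funext p
      by_cases h : p ∈ B
      · simp [h]
      · simp only [dif_neg h]
        by_contra hne
        exact h ((y.2 p).mp (Ne.symm hne))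
    right_inv := fun f => by
      funext p
      apply Subtype.ext
      simp }
  rw [Fintype.card_congr E, Fintype.card_fun, card_nz q hq, Fintype.card_coe]
  push_cast
  ring

end Aux

/-- Let `F` be a finite field with `q` elements, `K, L, J ≥ 1`, `N = K·L`, and
`1 ≤ K_j ≤ K` for `j = 1, …, J`. Let `H` be the random `(J·L)×N` matrix over `F` obtained
by stacking `J` independent random strips, the `j`-th strip built from the strip pattern
with parameters `(K, K_j, L)` with i.i.d. uniform nonzero labels and an independent uniform
column permutation (sample space `Ω = Π_j (labels_j × Perm (Fin N))`, uniform). Then for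
every `1 ≤ w ≤ N`, the expected number of `x ∈ F^N` with Hamming weight `w` and `Hx = 0`
equals `(q-1)^{w(1-J)} · binom(N,w)^{1-J} · Π_j f_{j,w}`, where `f_{j,w}` is the coefficient
of `s^w` in `f_j(s)^L`. -/
theorem stmt_7 (F : Type*) [Field F] [Fintype F] [DecidableEq F]
    (q : ℕ) (hq : Fintype.card F = q) (K L J : ℕ) (hK : 1 ≤ K) (hL : 1 ≤ L) (hJ : 1 ≤ J)
    (Kj : Fin J → ℕ) (hKj1 : ∀ j, 1 ≤ Kj j) (hKjK : ∀ j, Kj j ≤ K)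
    (w : ℕ) (hw1 : 1 ≤ w) (hwN : w ≤ K * L) :
    (∑ ω : (j : Fin J) →
        ((Fin L → Fin (Kj j) → {a : F // a ≠ 0}) × Equiv.Perm (Fin (K * L))),
        ((Finset.univ.filter
            (fun x : Fin (K * L) → F => hammingWt x = w ∧
              ∀ j : Fin J, ∀ t : Fin L, ∑ i : Fin (Kj j),
                ((ω j).1 t i : F) *
                  x ((ω j).2 (stripIdx K L i.1 t.1 (lt_of_lt_of_le i.isLt (hKjK j))
                    t.isLt)) = 0)).card : ℚ)) /
      (Fintype.card ((j : Fin J) →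
        ((Fin L → Fin (Kj j) → {a : F // a ≠ 0}) × Equiv.Perm (Fin (K * L)))) : ℚ)
      = ((q : ℚ) - 1) ^ ((w : ℤ) * (1 - (J : ℤ))) *
          (((K * L).choose w : ℚ)) ^ (1 - (J : ℤ)) *
          ∏ j : Fin J, ((fpoly q K (Kj j)) ^ L).coeff w := by
  classical
  have hq2 : 1 < q := hq ▸ Fintype.one_lt_card
  have hq1 : ((q:ℚ) - 1) ≠ 0 := by
    have h : (1:ℚ) < (q:ℚ) := by exact_mod_cast hq2
    linarith
  have hq1' : ((q - 1 : ℕ) : ℚ) = (q:ℚ) - 1 := natcast_pred q hq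
  have hchs0 : (((K*L).choose w : ℕ) : ℚ) ≠ 0 :=
    Nat.cast_ne_zero.mpr (Nat.choose_pos hwN).ne'
  have hfac0 : (((K*L).factorial : ℕ) : ℚ) ≠ 0 :=
    Nat.cast_ne_zero.mpr (Nat.factorial_ne_zero _)
  set t : Finset (Finset (Fin (K*L))) := Finset.powersetCard w Finset.univ with hT
  -- the support-indicator based count
  set gB : (j : Fin J) → Finset (Fin (K*L)) → ℚ := fun j B =>
    ∑ a : Fin L → Fin (Kj j) → {x : F // x ≠ 0},
      if (∀ t : Fin L, ∑ i : Fin (Kj j), (a t i : F) *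
        (fun p => if p ∈ B then (1:F) else 0)
          (stripIdx K L i.1 t.1 (lt_of_lt_of_le i.isLt (hKjK j)) t.isLt) = 0)
      then (1:ℚ) else 0 with hgB
  have hD : ∀ (j : Fin J) (y : Fin (K*L) → F),
      (∑ a : Fin L → Fin (Kj j) → {x : F // x ≠ 0},
        if (∀ t : Fin L, ∑ i : Fin (Kj j), (a t i : F) *
          y (stripIdx K L i.1 t.1 (lt_of_lt_of_le i.isLt (hKjK j)) t.isLt) = 0)
        then (1:ℚ) else 0)
      = gB j (Finset.univ.filter (fun p => y p ≠ 0)) := by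
    intro j y
    apply D_supp K L (Kj j) (hKjK j) y
      (fun p => if p ∈ Finset.univ.filter (fun r => y r ≠ 0) then (1:F) else 0)
    intro p
    by_cases hp : y p = 0 <;> simp [hp]
  have hsplit : ∀ y : Fin (K*L) → F, (if hammingWt y = w then (1:ℚ) else 0)
      = ∑ B ∈ t, (if Finset.univ.filter (fun p => y p ≠ 0) = B then (1:ℚ) else 0) := by
    intro y
    rw [Finset.sum_ite_eq t (Finset.univ.filter (fun p => y p ≠ 0)) (fun _ => (1:ℚ))]
    simp [hT, Finset.mem_powersetCard_univ, hammingWt]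
  have hfib : ∀ B ∈ t, (∑ y : Fin (K*L) → F,
      if Finset.univ.filter (fun p => y p ≠ 0) = B then (1:ℚ) else 0)
      = ((q:ℚ) - 1) ^ w := by
    intro B hB
    rw [supp_fiber_count q hq (K*L) B, hq1',
      (Finset.mem_powersetCard_univ.mp (hT ▸ hB) : B.card = w)]
  -- number of weight-w vectors
  have hcount : ((Finset.univ.filter
        (fun x : Fin (K*L) → F => hammingWt x = w)).card : ℚ)
      = (((K*L).choose w : ℕ) : ℚ) * ((q:ℚ) - 1) ^ w := by
    rw [← Finset.sum_boole, Finset.sum_congr rfl (fun y _ => hsplit y), Finset.sum_comm,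
      Finset.sum_congr rfl hfib, Finset.sum_const, hT, Finset.card_powersetCard,
      Finset.card_univ, Fintype.card_fin, nsmul_eq_mul]
  -- coefficient identity
  have hcoeff : ∀ j : Fin J, ((q:ℚ) - 1) ^ w * (∑ B ∈ t, gB j B)
      = ((q:ℚ) - 1) ^ (Kj j * L) * ((fpoly q K (Kj j)) ^ L).coeff w := by
    intro j
    have h := congrArg (fun p : ℚ[X] => p.coeff w) (gf_strip q hq K L (Kj j) (hKjK j))
    rw [Polynomial.finset_sum_coeff] at h
    have h3 : ∀ y : Fin (K*L) → F,
        ((∑ a : Fin L → Fin (Kj j) → {x : F // x ≠ 0},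
          if (∀ t : Fin L, ∑ i : Fin (Kj j), (a t i : F) *
            y (stripIdx K L i.1 t.1 (lt_of_lt_of_le i.isLt (hKjK j)) t.isLt) = 0)
          then (1:ℚ[X]) else 0) * X ^ hammingWt y).coeff w
        = gB j (Finset.univ.filter (fun p => y p ≠ 0)) *
            (if hammingWt y = w then (1:ℚ) else 0) := by
      intro y
      have hC : (∑ a : Fin L → Fin (Kj j) → {x : F // x ≠ 0},
          if (∀ t : Fin L, ∑ i : Fin (Kj j), (a t i : F) *
            y (stripIdx K L i.1 t.1 (lt_of_lt_of_le i.isLt (hKjK j)) t.isLt) = 0)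
          then (1:ℚ[X]) else 0)
        = Polynomial.C (∑ a : Fin L → Fin (Kj j) → {x : F // x ≠ 0},
          if (∀ t : Fin L, ∑ i : Fin (Kj j), (a t i : F) *
            y (stripIdx K L i.1 t.1 (lt_of_lt_of_le i.isLt (hKjK j)) t.isLt) = 0)
          then (1:ℚ) else 0) := by
        rw [map_sum]
        exact Finset.sum_congr rfl (fun a _ => by split <;> simp)
      rw [hC, Polynomial.coeff_C_mul, Polynomial.coeff_X_pow, hD j y]
      congr 1
      simp [eq_comm]
    rw [Finset.sum_congr rfl (fun y _ => h3 y)] at h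
    have h4 : ∀ y : Fin (K*L) → F,
        gB j (Finset.univ.filter (fun p => y p ≠ 0)) *
          (if hammingWt y = w then (1:ℚ) else 0)
        = ∑ B ∈ t, (if Finset.univ.filter (fun p => y p ≠ 0) = B then (1:ℚ) else 0)
            * gB j B := by
      intro y
      rw [hsplit y, Finset.mul_sum]
      apply Finset.sum_congr rfl
      intro B _
      by_cases hYB : Finset.univ.filter (fun p => y p ≠ 0) = B
      · rw [hYB]; simp [mul_comm]
      · simp [hYB]
    rw [Finset.sum_congr rfl (fun y _ => h4 y), Finset.sum_comm] at h
    have h5 : ∀ B ∈ t, (∑ y : Fin (K*L) → F,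
        (if Finset.univ.filter (fun p => y p ≠ 0) = B then (1:ℚ) else 0) * gB j B)
        = ((q:ℚ) - 1) ^ w * gB j B := by
      intro B hB
      rw [← Finset.sum_mul, hfib B hB]
    rw [Finset.sum_congr rfl h5, ← Finset.mul_sum] at h
    rw [h]
    rw [mul_pow, ← pow_mul, ← Polynomial.C_pow, Polynomial.coeff_C_mul]
  -- cardinality of the sample space
  have hcard : ((Fintype.card ((j : Fin J) →
      ((Fin L → Fin (Kj j) → {a : F // a ≠ 0}) × Equiv.Perm (Fin (K * L)))) : ℕ) : ℚ)
      = ∏ j : Fin J, (((q:ℚ) - 1) ^ (Kj j * L) * (((K*L).factorial : ℕ) : ℚ)) := by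
    rw [Fintype.card_pi]
    push_cast
    apply Finset.prod_congr rfl
    intro j _
    rw [Fintype.card_prod, Fintype.card_fun, Fintype.card_fun, card_nz q hq,
      Fintype.card_perm, Fintype.card_fin, Fintype.card_fin, Fintype.card_fin]
    push_cast [hq1']
    rw [← pow_mul]
  have hsupp : ∀ (x : Fin (K*L) → F) (σ : Equiv.Perm (Fin (K*L))),
      Finset.univ.filter (fun p => (x ∘ ⇑σ) p ≠ 0)
      = (Finset.univ.filter (fun p => x p ≠ 0)).image ⇑σ⁻¹ := by
    intro x σ
    ext p
    simp only [Finset.mem_filter, Finset.mem_univ, true_and, Finset.mem_image,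
      Function.comp_apply]
    constructor
    · intro hp; exact ⟨σ p, hp, by simp⟩
    · rintro ⟨r, hr, rfl⟩; simpa using hr
  have hinner : ∀ x : Fin (K*L) → F, hammingWt x = w →
      (∑ ω : (j : Fin J) →
      ((Fin L → Fin (Kj j) → {a : F // a ≠ 0}) × Equiv.Perm (Fin (K * L))),
        if (∀ j : Fin J, ∀ t : Fin L, ∑ i : Fin (Kj j),
              ((ω j).1 t i : F) *
                x ((ω j).2 (stripIdx K L i.1 t.1 (lt_of_lt_of_le i.isLt (hKjK j))
                  t.isLt)) = 0)
        then (1:ℚ) else 0)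
      = ∏ j : Fin J, ((((K*L).factorial : ℕ) : ℚ) / (((K*L).choose w : ℕ) : ℚ)
          * (∑ B ∈ t, gB j B)) := by
    intro x hx
    have hsp : ∀ ω : (j : Fin J) →
      ((Fin L → Fin (Kj j) → {a : F // a ≠ 0}) × Equiv.Perm (Fin (K * L))),
        (if (∀ j : Fin J, ∀ t : Fin L, ∑ i : Fin (Kj j),
              ((ω j).1 t i : F) *
                x ((ω j).2 (stripIdx K L i.1 t.1 (lt_of_lt_of_le i.isLt (hKjK j))
                  t.isLt)) = 0)
        then (1:ℚ) else 0)
        = ∏ j : Fin J, (if (∀ t : Fin L, ∑ i : Fin (Kj j),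
            ((ω j).1 t i : F) *
              x ((ω j).2 (stripIdx K L i.1 t.1 (lt_of_lt_of_le i.isLt (hKjK j))
                t.isLt)) = 0) then (1:ℚ) else 0) := by
      intro ω
      by_cases h : ∀ j : Fin J, ∀ t : Fin L, ∑ i : Fin (Kj j),
              ((ω j).1 t i : F) *
                x ((ω j).2 (stripIdx K L i.1 t.1 (lt_of_lt_of_le i.isLt (hKjK j))
                  t.isLt)) = 0
      · rw [if_pos h, Finset.prod_congr rfl (fun j _ => if_pos (h j)),
          Finset.prod_const_one]
      · push_neg at h
        obtain ⟨j, t0, hj⟩ := h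
        rw [if_neg (by push_neg; exact ⟨j, t0, hj⟩)]
        refine (Finset.prod_eq_zero (Finset.mem_univ j) ?_).symm
        refine if_neg ?_
        push_neg
        exact ⟨t0, hj⟩
    rw [Finset.sum_congr rfl (fun ω _ => hsp ω), ← Fintype.prod_sum
      (fun (j : Fin J)
          (z : (Fin L → Fin (Kj j) → {x : F // x ≠ 0}) × Equiv.Perm (Fin (K*L))) =>
        if (∀ t : Fin L, ∑ i : Fin (Kj j), (z.1 t i : F) *
          x (z.2 (stripIdx K L i.1 t.1 (lt_of_lt_of_le i.isLt (hKjK j)) t.isLt)) = 0)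
        then (1:ℚ) else 0)]
    apply Finset.prod_congr rfl
    intro j _
    rw [Fintype.sum_prod_type_right]
    have hDc : ∀ σ : Equiv.Perm (Fin (K*L)),
        (∑ a : Fin L → Fin (Kj j) → {x : F // x ≠ 0},
          if (∀ t : Fin L, ∑ i : Fin (Kj j), (a t i : F) *
            x (σ (stripIdx K L i.1 t.1 (lt_of_lt_of_le i.isLt (hKjK j)) t.isLt)) = 0)
          then (1:ℚ) else 0)
        = gB j ((Finset.univ.filter (fun p => x p ≠ 0)).image ⇑σ⁻¹) := by
      intro σ
      rw [← hsupp x σ]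
      exact hD j (x ∘ ⇑σ)
    rw [Finset.sum_congr rfl (fun σ _ => hDc σ)]
    have hswap : (∑ σ : Equiv.Perm (Fin (K*L)),
        gB j ((Finset.univ.filter (fun p => x p ≠ 0)).image ⇑σ⁻¹))
        = ∑ σ : Equiv.Perm (Fin (K*L)),
            gB j ((Finset.univ.filter (fun p => x p ≠ 0)).image ⇑σ) :=
      Fintype.sum_equiv (Equiv.inv (Equiv.Perm (Fin (K*L)))) _ _ (fun σ => rfl)
    rw [hswap, sum_perm_image (gB j) (Finset.univ.filter (fun p => x p ≠ 0)) hx]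
  have hnum : (∑ ω : (j : Fin J) →
      ((Fin L → Fin (Kj j) → {a : F // a ≠ 0}) × Equiv.Perm (Fin (K * L))),
      ((Finset.univ.filter
          (fun x : Fin (K * L) → F => hammingWt x = w ∧
            ∀ j : Fin J, ∀ t : Fin L, ∑ i : Fin (Kj j),
              ((ω j).1 t i : F) *
                x ((ω j).2 (stripIdx K L i.1 t.1 (lt_of_lt_of_le i.isLt (hKjK j))
                  t.isLt)) = 0)).card : ℚ))
      = (((K*L).choose w : ℕ) : ℚ) * ((q:ℚ) - 1) ^ w *
        ∏ j : Fin J, ((((K*L).factorial : ℕ) : ℚ) / (((K*L).choose w : ℕ) : ℚ)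
          * (∑ B ∈ t, gB j B)) := by
    have e1 : ∀ ω : (j : Fin J) →
      ((Fin L → Fin (Kj j) → {a : F // a ≠ 0}) × Equiv.Perm (Fin (K * L))),
        ((Finset.univ.filter
          (fun x : Fin (K * L) → F => hammingWt x = w ∧
            ∀ j : Fin J, ∀ t : Fin L, ∑ i : Fin (Kj j),
              ((ω j).1 t i : F) *
                x ((ω j).2 (stripIdx K L i.1 t.1 (lt_of_lt_of_le i.isLt (hKjK j))
                  t.isLt)) = 0)).card : ℚ)
        = ∑ x : Fin (K*L) → F, if (hammingWt x = w ∧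
            ∀ j : Fin J, ∀ t : Fin L, ∑ i : Fin (Kj j),
              ((ω j).1 t i : F) *
                x ((ω j).2 (stripIdx K L i.1 t.1 (lt_of_lt_of_le i.isLt (hKjK j))
                  t.isLt)) = 0) then (1:ℚ) else 0 :=
      fun ω => (Finset.sum_boole _ _).symm
    rw [Finset.sum_congr rfl (fun ω _ => e1 ω), Finset.sum_comm]
    have e2 : ∀ x : Fin (K*L) → F,
        (∑ ω : (j : Fin J) →
      ((Fin L → Fin (Kj j) → {a : F // a ≠ 0}) × Equiv.Perm (Fin (K * L))),
          if (hammingWt x = w ∧ ∀ j : Fin J, ∀ t : Fin L, ∑ i : Fin (Kj j),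
              ((ω j).1 t i : F) *
                x ((ω j).2 (stripIdx K L i.1 t.1 (lt_of_lt_of_le i.isLt (hKjK j))
                  t.isLt)) = 0) then (1:ℚ) else 0)
        = if hammingWt x = w then
            (∑ ω : (j : Fin J) →
      ((Fin L → Fin (Kj j) → {a : F // a ≠ 0}) × Equiv.Perm (Fin (K * L))),
              if (∀ j : Fin J, ∀ t : Fin L, ∑ i : Fin (Kj j),
              ((ω j).1 t i : F) *
                x ((ω j).2 (stripIdx K L i.1 t.1 (lt_of_lt_of_le i.isLt (hKjK j))
                  t.isLt)) = 0) then (1:ℚ) else 0) else 0 := by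
      intro x
      by_cases h1 : hammingWt x = w
      · rw [if_pos h1]
        apply Finset.sum_congr rfl
        intro ω _
        by_cases h2 : ∀ j : Fin J, ∀ t : Fin L, ∑ i : Fin (Kj j),
              ((ω j).1 t i : F) *
                x ((ω j).2 (stripIdx K L i.1 t.1 (lt_of_lt_of_le i.isLt (hKjK j))
                  t.isLt)) = 0
        · rw [if_pos ⟨h1, h2⟩, if_pos h2]
        · rw [if_neg (fun hc => h2 hc.2), if_neg h2]
      · rw [if_neg h1]
        apply Finset.sum_eq_zero
        intro ω _
        exact if_neg (fun hc => h1 hc.1)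
    rw [Finset.sum_congr rfl (fun x _ => e2 x), ← Finset.sum_filter,
      Finset.sum_congr rfl (fun x hx => hinner x (Finset.mem_filter.mp hx).2),
      Finset.sum_const, nsmul_eq_mul, hcount]
  rw [hnum, hcard]
  have hjfac : ∀ j : Fin J,
      ((((K*L).factorial : ℕ) : ℚ) / (((K*L).choose w : ℕ) : ℚ) * (∑ B ∈ t, gB j B))
        / (((q:ℚ) - 1) ^ (Kj j * L) * (((K*L).factorial : ℕ) : ℚ))
      = ((fpoly q K (Kj j)) ^ L).coeff w
        / ((((K*L).choose w : ℕ) : ℚ) * ((q:ℚ) - 1) ^ w) := by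
    intro j
    have h := hcoeff j
    have hk0 : ((q:ℚ)-1) ^ (Kj j * L) ≠ 0 := pow_ne_zero _ hq1
    have hw0 : ((q:ℚ)-1) ^ w ≠ 0 := pow_ne_zero _ hq1
    have hE : (∑ B ∈ t, gB j B)
        = ((q:ℚ)-1) ^ (Kj j * L) * ((fpoly q K (Kj j)) ^ L).coeff w / ((q:ℚ)-1) ^ w := by
      field_simp
      linear_combination h
    rw [hE]
    field_simp
  rw [mul_div_assoc, ← Finset.prod_div_distrib,
    Finset.prod_congr rfl (fun j _ => hjfac j),
    Finset.prod_div_distrib, Finset.prod_const, Finset.card_univ, Fintype.card_fin]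
  have hzp : ((q:ℚ)-1) ^ ((w:ℤ) * (1 - (J:ℤ))) = ((q:ℚ)-1)^w / ((q:ℚ)-1)^(w*J) := by
    rw [show (w:ℤ) * (1 - (J:ℤ)) = ((w:ℕ):ℤ) - (((w*J) : ℕ) : ℤ) by push_cast; ring,
      zpow_sub₀ hq1, zpow_natCast, zpow_natCast]
  have hzc : (((K*L).choose w : ℚ)) ^ (1 - (J:ℤ))
      = (((K*L).choose w : ℚ)) / (((K*L).choose w : ℚ))^J := by
    rw [show (1 - (J:ℤ)) = ((1:ℕ):ℤ) - ((J:ℕ):ℤ) by push_cast; ring,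
      zpow_sub₀ hchs0, zpow_natCast, zpow_natCast, pow_one]
  rw [hzp, hzc, mul_pow, pow_mul]
  have hcJ : (((K*L).choose w : ℚ))^J ≠ 0 := pow_ne_zero _ hchs0
  have hqJ : (((q:ℚ)-1)^w)^J ≠ 0 := pow_ne_zero _ (pow_ne_zero _ hq1)
  field_simp
end
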